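/- Let P and Q be probability measures on a measurable space Ω with P absolutely continuous with respect to Q and KL(P‖Q) < ∞. Then KL(P‖Q) = sup over all bounded measurable F : Ω → ℝ of ( ∫ F dP − log ∫ exp(F) dQ ) (the Donsker–Varadhan variational representation of the Kullback–Leibler divergence). -/

import Mathlib

open MeasureTheory Real Classical

/-- The Kullback–Leibler divergence `KL(P‖Q) = ∫ log (dP/dQ) dP` when `P ≪ Q` (and the
integral is finite), and `+∞` otherwise, as an extended real number. -/
noncomputable def KLdiv {Ω : Type*} [MeasurableSpace Ω] (P Q : Measure Ω) : EReal :=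
  if P ≪ Q ∧ Integrable (llr P Q) P then ((∫ ω, llr P Q ω ∂P : ℝ) : EReal) else ⊤

lemma gibbs_nonneg {Ω : Type*} [MeasurableSpace Ω] (P ν : Measure Ω)
    [IsProbabilityMeasure P] [IsProbabilityMeasure ν]
    (h : P ≪ ν) (hint : Integrable (llr P ν) P) :
    0 ≤ ∫ x, llr P ν x ∂P := by
  set g : Ω → ℝ := fun x ↦ exp (- llr P ν x) with hg_def
  have hg_ae : g =ᵐ[P] fun x ↦ (ν.rnDeriv P x).toReal := exp_neg_llr h
  have hg_int : Integrable g P :=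
    (integrable_congr hg_ae).mpr (Measure.integrable_toReal_rnDeriv)
  set t : ℝ := ∫ x, g x ∂P with ht_def
  have ht_pos : 0 < t := integral_exp_pos hg_int
  have ht_le : t ≤ 1 := by
    rw [ht_def, integral_congr_ae hg_ae, Measure.integral_toReal_rnDeriv']
    have h1 : ν.real Set.univ = 1 := by simp
    have h2 : (0:ℝ) ≤ (ν.singularPart P).real Set.univ := ENNReal.toReal_nonneg
    linarith
  have hpt : ∀ x, - log t - (g x / t - 1) ≤ llr P ν x := by
    intro x
    have h1 : log (g x / t) ≤ g x / t - 1 :=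
      log_le_sub_one_of_pos (div_pos (exp_pos _) ht_pos)
    rw [log_div (exp_pos _).ne' ht_pos.ne', hg_def, log_exp] at h1
    linarith
  have hint1 : Integrable (fun x ↦ g x / t - 1) P :=
    (hg_int.div_const t).sub (integrable_const 1)
  have hint3 : Integrable (fun x ↦ - log t - (g x / t - 1)) P :=
    (integrable_const _).sub hint1
  have h5 := integral_mono hint3 hint hpt
  have hL : ∫ x, (- log t - (g x / t - 1)) ∂P = - log t - (t / t - 1) := by
    have h1 : ∫ x, (g x / t - 1) ∂P = t / t - 1 := by
      rw [integral_sub (hg_int.div_const t) (integrable_const 1), integral_div, integral_const]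
      simp [← ht_def]
    rw [integral_sub (integrable_const _) hint1, h1, integral_const]
    simp
  rw [hL, div_self ht_pos.ne'] at h5
  have hlt : log t ≤ 0 := log_nonpos ht_pos.le ht_le
  linarith

/-- Upper bound: the DV objective of any bounded measurable function is at most `∫ llr`. -/
lemma dv_le_integral_llr {Ω : Type*} [MeasurableSpace Ω] (P Q : Measure Ω)
    [IsProbabilityMeasure P] [IsProbabilityMeasure Q]
    (hPQ : P ≪ Q) (hint : Integrable (llr P Q) P)
    (F : Ω → ℝ) (hF : Measurable F) (C : ℝ) (hC : ∀ ω, |F ω| ≤ C) :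
    (∫ ω, F ω ∂P) - log (∫ ω, exp (F ω) ∂Q) ≤ ∫ ω, llr P Q ω ∂P := by
  have hFP : Integrable F P :=
    Integrable.mono' (integrable_const C) hF.aestronglyMeasurable
      (ae_of_all _ fun x ↦ by simpa using hC x)
  have hexpQ : Integrable (fun x ↦ exp (F x)) Q := by
    refine Integrable.mono' (integrable_const (exp C)) (hF.exp).aestronglyMeasurable
      (ae_of_all _ fun x ↦ ?_)
    rw [norm_of_nonneg (exp_pos _).le]
    exact exp_le_exp.mpr ((le_abs_self _).trans (hC x))
  have hTilt : IsProbabilityMeasure (Q.tilted F) := isProbabilityMeasure_tilted hexpQ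
  have hPt : P ≪ Q.tilted F := hPQ.trans (absolutelyContinuous_tilted hexpQ)
  have hll_int : Integrable (llr P (Q.tilted F)) P :=
    integrable_llr_tilted_right hPQ hFP hint hexpQ
  have heq := integral_llr_tilted_right hPQ hFP hexpQ hint
  have h0 := gibbs_nonneg P (Q.tilted F) hPt hll_int
  rw [heq] at h0
  linarith

lemma abs_clamp_le {t n : ℝ} (hn : 0 ≤ n) : |min (max t (-n)) n| ≤ |t| := by
  rw [abs_le]
  constructor
  · exact le_min ((neg_abs_le t).trans (le_max_left _ _))
      ((neg_nonpos.mpr (abs_nonneg t)).trans hn)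
  · exact (min_le_left _ _).trans
      (max_le (le_abs_self t) ((neg_nonpos.mpr hn).trans (abs_nonneg t)))

lemma log_clamp {x a b : ℝ} (hx : 0 < x) (ha : 0 < a) (hb : 0 < b) :
    log (min (max x a) b) = min (max (log x) (log a)) (log b) := by
  rcases le_total x a with h1 | h1
  · rw [max_eq_right h1, max_eq_right (log_le_log hx h1)]
    rcases le_total a b with h2 | h2
    · rw [min_eq_left h2, min_eq_left (log_le_log ha h2)]
    · rw [min_eq_right h2, min_eq_right (log_le_log hb h2)]
  · rw [max_eq_left h1, max_eq_left (log_le_log ha h1)]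
    rcases le_total x b with h2 | h2
    · rw [min_eq_left h2, min_eq_left (log_le_log hx h2)]
    · rw [min_eq_right h2, min_eq_right (log_le_log hb h2)]

/-- Donsker–Varadhan variational representation: the Kullback–Leibler divergence equals
the supremum of the Donsker–Varadhan objective over all bounded measurable functions. -/
theorem donsker_varadhan_representation {Ω : Type*} [MeasurableSpace Ω]
    (P Q : Measure Ω) [IsProbabilityMeasure P] [IsProbabilityMeasure Q]
    (hPQ : P ≪ Q) (hKL : KLdiv P Q < ⊤) :
    KLdiv P Q =
      ⨆ F : {F : Ω → ℝ // Measurable F ∧ ∃ C : ℝ, ∀ ω, |F ω| ≤ C},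
        (((∫ ω, (F : Ω → ℝ) ω ∂P) - Real.log (∫ ω, Real.exp ((F : Ω → ℝ) ω) ∂Q) : ℝ) : EReal) := by
  -- extract integrability from finiteness of KL
  have hint : Integrable (llr P Q) P := by
    by_contra h
    rw [KLdiv, if_neg (fun hc ↦ h hc.2)] at hKL
    exact lt_irrefl _ hKL
  rw [KLdiv, if_pos ⟨hPQ, hint⟩]
  set K : ℝ := ∫ ω, llr P Q ω ∂P with hK_def
  apply le_antisymm
  · -- K ≤ sup, via truncations of llr
    set f : Ω → ℝ := fun ω ↦ (P.rnDeriv Q ω).toReal with hf_def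
    have hf_meas : Measurable f := (Measure.measurable_rnDeriv P Q).ennreal_toReal
    set Fn : ℕ → Ω → ℝ := fun n ω ↦ log (min (max (f ω) (exp (-(n:ℝ)))) (exp (n:ℝ)))
      with hFn_def
    have hFn_meas : ∀ n, Measurable (Fn n) :=
      fun n ↦ ((hf_meas.max measurable_const).min measurable_const).log
    have harg_pos : ∀ n ω, 0 < min (max (f ω) (exp (-(n:ℝ)))) (exp (n:ℝ)) := fun n ω ↦
      lt_min (lt_of_lt_of_le (exp_pos _) (le_max_right _ _)) (exp_pos _)
    have hFn_bdd : ∀ n, ∀ ω, |Fn n ω| ≤ (n : ℝ) := by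
      intro n ω
      have h1 : exp (-(n:ℝ)) ≤ min (max (f ω) (exp (-(n:ℝ)))) (exp (n:ℝ)) :=
        le_min ((le_max_right _ _)) (exp_le_exp.mpr (neg_le_self (Nat.cast_nonneg n)))
      have h2 : min (max (f ω) (exp (-(n:ℝ)))) (exp (n:ℝ)) ≤ exp (n:ℝ) := min_le_right _ _
      rw [abs_le]
      constructor
      · have := log_le_log (exp_pos _) h1
        rwa [log_exp] at this
      · have := log_le_log (harg_pos n ω) h2
        rwa [log_exp] at this
    -- ∫ exp (Fn n) dQ ≤ 1 + exp (-n)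
    have hexp_eq : ∀ n ω, exp (Fn n ω) = min (max (f ω) (exp (-(n:ℝ)))) (exp (n:ℝ)) :=
      fun n ω ↦ exp_log (harg_pos n ω)
    have hf_int : Integrable f Q := Measure.integrable_toReal_rnDeriv
    have hexp_int : ∀ n, Integrable (fun ω ↦ exp (Fn n ω)) Q := by
      intro n
      refine Integrable.mono' (integrable_const (exp (n:ℝ)))
        ((hFn_meas n).exp).aestronglyMeasurable (ae_of_all _ fun ω ↦ ?_)
      rw [norm_of_nonneg (exp_pos _).le, hexp_eq]
      exact min_le_right _ _
    have hint_exp_le : ∀ n, ∫ ω, exp (Fn n ω) ∂Q ≤ 1 + exp (-(n:ℝ)) := by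
      intro n
      have h1 : ∀ ω, exp (Fn n ω) ≤ f ω + exp (-(n:ℝ)) := by
        intro ω
        rw [hexp_eq]
        refine (min_le_left _ _).trans (max_le ?_ ?_)
        · exact le_add_of_nonneg_right (exp_pos _).le
        · have : (0:ℝ) ≤ f ω := ENNReal.toReal_nonneg
          linarith
      have hsum_int : Integrable (fun ω ↦ f ω + exp (-(n:ℝ))) Q :=
        hf_int.add (integrable_const _)
      have h2 := integral_mono (hexp_int n) hsum_int h1
      rw [integral_add hf_int (integrable_const _), integral_const,
        Measure.integral_toReal_rnDeriv hPQ] at h2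
      simpa using h2
    have hexp_int_pos : ∀ n, 0 < ∫ ω, exp (Fn n ω) ∂Q := fun n ↦
      integral_exp_pos (hexp_int n)
    have hlog_le : ∀ n, log (∫ ω, exp (Fn n ω) ∂Q) ≤ log (1 + exp (-(n:ℝ))) :=
      fun n ↦ log_le_log (hexp_int_pos n) (hint_exp_le n)
    -- a.e. facts
    have hae : ∀ᵐ ω ∂P, 0 < P.rnDeriv Q ω ∧ P.rnDeriv Q ω < ⊤ :=
      (Measure.rnDeriv_pos hPQ).and (hPQ.ae_le (Measure.rnDeriv_lt_top P Q))
    have hFn_eq_clamp : ∀ᵐ ω ∂P, ∀ n : ℕ,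
        Fn n ω = min (max (llr P Q ω) (-(n:ℝ))) (n:ℝ) := by
      filter_upwards [hae] with ω hω n
      have hfpos : 0 < f ω := ENNReal.toReal_pos hω.1.ne' hω.2.ne
      rw [hFn_def]
      simp only
      rw [log_clamp hfpos (exp_pos _) (exp_pos _), log_exp, log_exp]
      rfl
    -- dominated convergence: ∫ Fn n dP → K
    have htend_int : Filter.Tendsto (fun n ↦ ∫ ω, Fn n ω ∂P) Filter.atTop (nhds K) := by
      refine tendsto_integral_of_dominated_convergence (fun ω ↦ |llr P Q ω|)
        (fun n ↦ (hFn_meas n).aestronglyMeasurable) hint.abs ?_ ?_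
      · intro n
        filter_upwards [hFn_eq_clamp] with ω hω
        rw [Real.norm_eq_abs, hω n]
        exact abs_clamp_le (Nat.cast_nonneg n)
      · filter_upwards [hFn_eq_clamp] with ω hω
        refine Filter.Tendsto.congr' ?_ tendsto_const_nhds
        rw [Filter.EventuallyEq, Filter.eventually_atTop]
        refine ⟨⌈|llr P Q ω|⌉₊, fun n hn ↦ ?_⟩
        have habs : |llr P Q ω| ≤ (n:ℝ) := (Nat.le_ceil _).trans (Nat.cast_le.mpr hn)
        rw [abs_le] at habs
        rw [hω n, max_eq_left habs.1, min_eq_left habs.2]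
    -- conclude via limits in EReal
    have hb : ∀ n : ℕ,
        (((∫ ω, Fn n ω ∂P) - log (1 + exp (-(n:ℝ))) : ℝ) : EReal) ≤
          ⨆ F : {F : Ω → ℝ // Measurable F ∧ ∃ C : ℝ, ∀ ω, |F ω| ≤ C},
            (((∫ ω, (F : Ω → ℝ) ω ∂P) - Real.log (∫ ω, Real.exp ((F : Ω → ℝ) ω) ∂Q) : ℝ) :
              EReal) := by
      intro n
      refine le_trans ?_
        (le_iSup (fun F : {F : Ω → ℝ // Measurable F ∧ ∃ C : ℝ, ∀ ω, |F ω| ≤ C} ↦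
          (((∫ ω, (F : Ω → ℝ) ω ∂P) - Real.log (∫ ω, Real.exp ((F : Ω → ℝ) ω) ∂Q) : ℝ) : EReal))
          ⟨Fn n, hFn_meas n, ⟨(n:ℝ), hFn_bdd n⟩⟩)
      refine EReal.coe_le_coe_iff.mpr ?_
      have := hlog_le n
      simp only
      linarith
    have hlogtend : Filter.Tendsto (fun n : ℕ ↦ log (1 + exp (-(n:ℝ)))) Filter.atTop (nhds 0) := by
      have h1 : Filter.Tendsto (fun n : ℕ ↦ exp (-(n:ℝ))) Filter.atTop (nhds 0) :=
        Real.tendsto_exp_atBot.comp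
          (Filter.tendsto_neg_atBot_iff.mpr tendsto_natCast_atTop_atTop)
      have h2 : Filter.Tendsto (fun n : ℕ ↦ 1 + exp (-(n:ℝ))) Filter.atTop (nhds 1) := by
        simpa using tendsto_const_nhds.add h1
      have h3 := ((Real.continuousAt_log (by norm_num : (1:ℝ) ≠ 0)).tendsto).comp h2
      simpa [Function.comp_def] using h3
    have htend : Filter.Tendsto
        (fun n : ℕ ↦ (((∫ ω, Fn n ω ∂P) - log (1 + exp (-(n:ℝ))) : ℝ) : EReal))
        Filter.atTop (nhds (K : EReal)) := by
      rw [EReal.tendsto_coe]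
      simpa using htend_int.sub hlogtend
    exact le_of_tendsto htend (Filter.Eventually.of_forall hb)
  · -- sup ≤ K
    refine iSup_le fun F ↦ ?_
    obtain ⟨C, hC⟩ := F.2.2
    exact EReal.coe_le_coe_iff.mpr (dv_le_integral_llr P Q hPQ hint F.1 F.2.1 C hC)
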